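/- Let F̄ be regularly varying of index -α, α > 0, a_n = F^{←}(1-1/n), and M > 1. Then there exists a sequence ε_n ↓ 0 such that for all sufficiently large n and all x ∈ [1, M], ((1-ε_n)/n) x^{-(log n)(α+ε_n)/α} ≤ F̄(a_n x^{(log n)/α}) ≤ ((1+ε_n)/n) x^{-(log n)(α-ε_n)/α}. -/

import Mathlib

set_option maxHeartbeats 1000000

open Filter

private lemma potterAux (G : ℝ → ℝ) (α : ℝ) (hα : 0 < α) (hGanti : Antitone G)
    (hGpos : ∀ x > (0:ℝ), 0 < G x)
    (hGlim : ∀ t > (0:ℝ), Tendsto (fun x => G (t*x) / G x) atTop (nhds (t ^ (-α))))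
    (δ : ℝ) (hδ0 : 0 < δ) (hδ1 : δ < 1) :
    ∃ X : ℝ, 1 ≤ X ∧ ∀ x, X ≤ x → ∀ y, 1 ≤ y →
      (1-δ) * y ^ (-(α+δ)) * G x ≤ G (x*y) ∧ G (x*y) ≤ (1+δ) * y ^ (-(α-δ)) * G x := by
  have hαδ : 0 < α + δ := by linarith
  set c : ℝ := (1 + δ*(1-δ)) ^ (1/(α+δ)) with hcdef
  have hbase : (1:ℝ) < 1 + δ*(1-δ) := by nlinarith
  have hbase0 : (0:ℝ) < 1 + δ*(1-δ) := by linarith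
  have hc1 : 1 < c := by
    rw [hcdef]
    exact Real.one_lt_rpow_iff_of_pos hbase0 |>.2 (Or.inl ⟨hbase, by positivity⟩)
  have hc0 : (0:ℝ) < c := by linarith
  have hcαδ : c ^ (α+δ) = 1 + δ*(1-δ) := by
    rw [hcdef, ← Real.rpow_mul hbase0.le, one_div_mul_cancel hαδ.ne', Real.rpow_one]
  have hcα : c ^ α ≤ 1+δ := by
    have h1 : c ^ α ≤ c ^ (α+δ) := Real.rpow_le_rpow_of_exponent_le hc1.le (by linarith)
    rw [hcαδ] at h1; nlinarith
  have hcL : (1-δ) * c ^ (α+δ) ≤ 1 := by rw [hcαδ]; nlinarith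
  have hcδ0 : (0:ℝ) < c ^ (-δ) := Real.rpow_pos_of_pos hc0 _
  have hcδ1 : c ^ (-δ) < 1 := Real.rpow_lt_one_of_one_lt_of_neg hc1 (by linarith)
  set η : ℝ := (1 - c ^ (-δ))/2 with hηdef
  have hη0 : 0 < η := by rw [hηdef]; linarith
  have hη1 : η < 1 := by rw [hηdef]; linarith
  have hηL : c ^ (-δ) ≤ 1 - η := by rw [hηdef]; linarith
  have hηU : 1 + η ≤ c ^ δ := by
    have hinv : c ^ (-δ) = (c ^ δ)⁻¹ := Real.rpow_neg hc0.le δ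
    have hδc0 : (0:ℝ) < c ^ δ := Real.rpow_pos_of_pos hc0 _
    have h2 : (c ^ δ)⁻¹ * c ^ δ = 1 := inv_mul_cancel₀ hδc0.ne'
    rw [hηdef, hinv]
    rw [hinv] at hcδ1
    nlinarith [sq_nonneg ((c ^ δ)⁻¹ - 1), mul_pos (inv_pos.2 hδc0) hδc0]
  have hcnegα : (0:ℝ) < c ^ (-α) := Real.rpow_pos_of_pos hc0 _
  have h1 : c ^ (-α) * (1-η) < c ^ (-α) := by nlinarith
  have h2 : c ^ (-α) < c ^ (-α) * (1+η) := by nlinarith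
  have hev : ∀ᶠ x in atTop, G (c*x) / G x ∈ Set.Ioo (c ^ (-α) * (1-η)) (c ^ (-α) * (1+η)) :=
    (hGlim c hc0) (Ioo_mem_nhds h1 h2)
  obtain ⟨X0, hX0⟩ := eventually_atTop.1 hev
  refine ⟨max X0 1, le_max_right _ _, ?_⟩
  have hstep : ∀ x, max X0 1 ≤ x →
      c ^ (-α) * (1-η) * G x ≤ G (c*x) ∧ G (c*x) ≤ c ^ (-α) * (1+η) * G x := by
    intro x hx
    have hx0 : (0:ℝ) < x := lt_of_lt_of_le one_pos (le_trans (le_max_right _ _) hx)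
    have hGx : 0 < G x := hGpos x hx0
    obtain ⟨hl, hr⟩ := hX0 x (le_trans (le_max_left _ _) hx)
    exact ⟨le_of_lt ((lt_div_iff₀ hGx).1 hl), le_of_lt ((div_lt_iff₀ hGx).1 hr)⟩
  have hchain : ∀ k : ℕ, ∀ x, max X0 1 ≤ x →
      (c ^ (-α) * (1-η))^k * G x ≤ G (x * c^k) ∧ G (x * c^k) ≤ (c ^ (-α) * (1+η))^k * G x := by
    intro k
    induction k with
    | zero => intro x hx; simp
    | succ k ih =>
      intro x hx
      have hx0 : (0:ℝ) < x := lt_of_lt_of_le one_pos (le_trans (le_max_right _ _) hx)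
      have hck : (1:ℝ) ≤ c^k := one_le_pow₀ hc1.le
      have hxk : max X0 1 ≤ x * c^k := le_trans hx (le_mul_of_one_le_right hx0.le hck)
      obtain ⟨ih1, ih2⟩ := ih x hx
      obtain ⟨h1', h2'⟩ := hstep (x*c^k) hxk
      have hrw : x * c^(k+1) = c * (x * c^k) := by ring
      rw [hrw]
      have hη1pos : (0:ℝ) ≤ c ^ (-α) * (1-η) := mul_nonneg hcnegα.le (by linarith)
      have hη2pos : (0:ℝ) ≤ c ^ (-α) * (1+η) := mul_nonneg hcnegα.le (by linarith)
      constructor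
      · calc (c ^ (-α) * (1-η))^(k+1) * G x
            = (c ^ (-α) * (1-η)) * ((c ^ (-α) * (1-η))^k * G x) := by ring
          _ ≤ (c ^ (-α) * (1-η)) * G (x * c^k) := mul_le_mul_of_nonneg_left ih1 hη1pos
          _ ≤ G (c * (x * c^k)) := h1'
      · calc G (c * (x * c^k)) ≤ c ^ (-α) * (1+η) * G (x * c^k) := h2'
          _ ≤ (c ^ (-α) * (1+η)) * ((c ^ (-α) * (1+η))^k * G x) :=
              mul_le_mul_of_nonneg_left ih2 hη2pos
          _ = (c ^ (-α) * (1+η))^(k+1) * G x := by ring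
  intro x hx y hy
  have hx1 : (1:ℝ) ≤ x := le_trans (le_max_right _ _) hx
  have hx0 : (0:ℝ) < x := lt_of_lt_of_le one_pos hx1
  have hy0 : (0:ℝ) < y := lt_of_lt_of_le one_pos hy
  have hGx : 0 < G x := hGpos x hx0
  have hlogc : 0 < Real.log c := Real.log_pos hc1
  have hlogy : 0 ≤ Real.log y := Real.log_nonneg hy
  set k : ℕ := ⌊Real.log y / Real.log c⌋₊ with hkdef
  have hck0 : (0:ℝ) < c ^ k := pow_pos hc0 k
  have hky : (c:ℝ)^k ≤ y := by
    have h1' : (k:ℝ) ≤ Real.log y / Real.log c := Nat.floor_le (by positivity)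
    have h2' : (k:ℝ) * Real.log c ≤ Real.log y := by
      rw [← le_div_iff₀ hlogc]; exact h1'
    have h3' : Real.log (c^k) ≤ Real.log y := by rw [Real.log_pow]; exact h2'
    exact (Real.log_le_log_iff hck0 hy0).1 h3'
  have hyk : y ≤ c^(k+1) := by
    have h1' : Real.log y / Real.log c < (k:ℝ)+1 := Nat.lt_floor_add_one _
    have h2' : Real.log y < ((k:ℝ)+1) * Real.log c := by
      rw [div_lt_iff₀ hlogc] at h1'; exact h1'
    have h3' : Real.log y < Real.log (c^(k+1)) := by rw [Real.log_pow]; push_cast; linarith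
    exact le_of_lt ((Real.log_lt_log_iff hy0 (pow_pos hc0 _)).1 h3')
  have hpowrw : ∀ (m : ℕ) (t : ℝ), ((c:ℝ) ^ t) ^ m = ((c^m : ℝ)) ^ t := by
    intro m t
    rw [← Real.rpow_natCast (c ^ t) m, ← Real.rpow_natCast c m,
      ← Real.rpow_mul hc0.le, ← Real.rpow_mul hc0.le, mul_comm]
  constructor
  · -- lower bound
    have hxy : x * y ≤ x * c^(k+1) := mul_le_mul_of_nonneg_left hyk hx0.le
    have hmono : G (x * c^(k+1)) ≤ G (x*y) := hGanti hxy
    have hch := (hchain (k+1) x hx).1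
    have hck1 : c^(k+1) ≤ c * y := by
      calc c^(k+1) = c * c^k := by ring
        _ ≤ c * y := mul_le_mul_of_nonneg_left hky hc0.le
    have hck10 : (0:ℝ) < c^(k+1) := pow_pos hc0 _
    have hcy0 : (0:ℝ) < c * y := mul_pos hc0 hy0
    have hA : ((c*y : ℝ)) ^ (-α) ≤ ((c^(k+1) : ℝ)) ^ (-α) :=
      Real.rpow_le_rpow_of_nonpos hck10 hck1 (by linarith)
    have hA' : (c ^ (-α))^(k+1) = ((c^(k+1) : ℝ)) ^ (-α) := hpowrw (k+1) (-α)
    have hB : ((c*y : ℝ)) ^ (-δ) ≤ ((c^(k+1) : ℝ)) ^ (-δ) :=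
      Real.rpow_le_rpow_of_nonpos hck10 hck1 (by linarith)
    have hB' : (c ^ (-δ))^(k+1) = ((c^(k+1) : ℝ)) ^ (-δ) := hpowrw (k+1) (-δ)
    have hηpow : (c ^ (-δ))^(k+1) ≤ (1-η)^(k+1) := pow_le_pow_left₀ hcδ0.le hηL _
    have hsplit : ((c*y:ℝ)) ^ (-α) * ((c*y:ℝ)) ^ (-δ) = ((c*y:ℝ)) ^ (-(α+δ)) := by
      rw [← Real.rpow_add hcy0]; ring_nf
    have hmulrpow : ((c*y:ℝ)) ^ (-(α+δ)) = c ^ (-(α+δ)) * y ^ (-(α+δ)) :=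
      Real.mul_rpow hc0.le hy0.le
    have hinv : (1-δ) ≤ c ^ (-(α+δ)) := by
      have h4 : c ^ (-(α+δ)) = (c ^ (α+δ))⁻¹ := Real.rpow_neg hc0.le _
      have h5 : (0:ℝ) < c ^ (α+δ) := Real.rpow_pos_of_pos hc0 _
      rw [h4]
      nlinarith [mul_le_mul_of_nonneg_right hcL (inv_nonneg.2 h5.le),
        mul_inv_cancel₀ h5.ne']
    have hscal : (1-δ) * y ^ (-(α+δ)) ≤ (c ^ (-α) * (1-η))^(k+1) := by
      have hu0 : (0:ℝ) ≤ y ^ (-(α+δ)) := (Real.rpow_pos_of_pos hy0 _).le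
      have hR10 : (0:ℝ) ≤ ((c*y:ℝ)) ^ (-α) := (Real.rpow_pos_of_pos hcy0 _).le
      have hR20 : (0:ℝ) ≤ ((c*y:ℝ)) ^ (-δ) := (Real.rpow_pos_of_pos hcy0 _).le
      have hP0 : (0:ℝ) ≤ ((c^(k+1):ℝ)) ^ (-α) := (Real.rpow_pos_of_pos hck10 _).le
      calc (1-δ) * y ^ (-(α+δ))
          ≤ c ^ (-(α+δ)) * y ^ (-(α+δ)) := mul_le_mul_of_nonneg_right hinv hu0
        _ = ((c*y:ℝ)) ^ (-α) * ((c*y:ℝ)) ^ (-δ) := by rw [hsplit, hmulrpow]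
        _ ≤ ((c^(k+1):ℝ)) ^ (-α) * (1-η)^(k+1) := by
            apply mul_le_mul hA (le_trans hB (hB' ▸ hηpow)) hR20 hP0
        _ = (c ^ (-α) * (1-η))^(k+1) := by rw [mul_pow, hA']
    calc (1-δ) * y ^ (-(α+δ)) * G x
        ≤ (c ^ (-α) * (1-η))^(k+1) * G x := mul_le_mul_of_nonneg_right hscal hGx.le
      _ ≤ G (x * c^(k+1)) := hch
      _ ≤ G (x*y) := hmono
  · -- upper bound
    have hxy : x * c^k ≤ x * y := mul_le_mul_of_nonneg_left hky hx0.le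
    have hmono : G (x*y) ≤ G (x * c^k) := hGanti hxy
    have hch := (hchain k x hx).2
    have hyc : y / c ≤ c^k := by
      rw [div_le_iff₀ hc0]
      calc y ≤ c^(k+1) := hyk
        _ = c^k * c := by ring
    have hyc0 : (0:ℝ) < y / c := div_pos hy0 hc0
    have hA : ((c^k:ℝ)) ^ (-α) ≤ ((y/c:ℝ)) ^ (-α) :=
      Real.rpow_le_rpow_of_nonpos hyc0 hyc (by linarith)
    have hA' : (c ^ (-α))^k = ((c^k : ℝ)) ^ (-α) := hpowrw k (-α)
    have hηpow : (1+η)^k ≤ (c ^ δ)^k := pow_le_pow_left₀ (by linarith) hηU _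
    have hB' : (c ^ δ)^k = ((c^k : ℝ)) ^ δ := hpowrw k δ
    have hB : ((c^k:ℝ)) ^ δ ≤ y ^ δ := Real.rpow_le_rpow hck0.le hky hδ0.le
    have hdivrw : ((y/c:ℝ)) ^ (-α) = y ^ (-α) * c ^ α := by
      rw [Real.div_rpow hy0.le hc0.le, Real.rpow_neg hc0.le α]; field_simp
    have hscal : (c ^ (-α) * (1+η))^k ≤ (1+δ) * y ^ (-(α-δ)) := by
      have hyα0 : (0:ℝ) ≤ y ^ (-α) := (Real.rpow_pos_of_pos hy0 _).le
      have hyδ0 : (0:ℝ) ≤ y ^ δ := (Real.rpow_pos_of_pos hy0 _).le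
      have hcα0 : (0:ℝ) ≤ c ^ α := (Real.rpow_pos_of_pos hc0 _).le
      have hη0' : (0:ℝ) ≤ (1+η)^k := pow_nonneg (by linarith) _
      have hsplit2 : y ^ (-α) * y ^ δ = y ^ (-(α-δ)) := by
        rw [← Real.rpow_add hy0]; ring_nf
      calc (c ^ (-α) * (1+η))^k = (c ^ (-α))^k * (1+η)^k := by rw [mul_pow]
        _ ≤ ((y/c:ℝ)) ^ (-α) * (y ^ δ) := by
            apply mul_le_mul (hA' ▸ hA) (le_trans hηpow (hB' ▸ hB)) hη0'
              (Real.rpow_pos_of_pos hyc0 _).le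
        _ = (y ^ (-α) * y ^ δ) * c ^ α := by rw [hdivrw]; ring
        _ ≤ (y ^ (-α) * y ^ δ) * (1+δ) := by
            apply mul_le_mul_of_nonneg_left hcα (mul_nonneg hyα0 hyδ0)
        _ = (1+δ) * y ^ (-(α-δ)) := by rw [hsplit2]; ring
    calc G (x*y) ≤ G (x * c^k) := hmono
      _ ≤ (c ^ (-α) * (1+η))^k * G x := hch
      _ ≤ (1+δ) * y ^ (-(α-δ)) * G x := mul_le_mul_of_nonneg_right hscal hGx.le

private lemma diagAux (P : ℕ → ℝ → Prop)
    (h : ∀ k : ℕ, ∀ᶠ n in atTop, P n (1/((k:ℝ)+2))) :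
    ∃ ε : ℕ → ℝ, (∀ n, 0 < ε n) ∧ Antitone ε ∧ Tendsto ε atTop (nhds 0) ∧
      ∀ᶠ n in atTop, P n (ε n) := by
  have hN : ∀ k : ℕ, ∃ N : ℕ, ∀ n, N ≤ n → P n (1/((k:ℝ)+2)) := by
    intro k; exact eventually_atTop.1 (h k)
  choose N hNspec using hN
  obtain ⟨N', hN'0, hN'succ⟩ : ∃ N' : ℕ → ℕ, N' 0 = N 0 ∧
      ∀ k, N' (k+1) = max (N' k + 1) (N (k+1)) :=
    ⟨fun k => Nat.rec (N 0) (fun k ih => max (ih + 1) (N (k+1))) k, rfl, fun k => rfl⟩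
  have hN'mono : StrictMono N' := strictMono_nat_of_lt_succ (by
    intro k; rw [hN'succ]; exact lt_of_lt_of_le (Nat.lt_succ_self _) (le_max_left _ _))
  have hN'ge : ∀ k, N k ≤ N' k := by
    intro k; cases k with
    | zero => rw [hN'0]
    | succ k => rw [hN'succ]; exact le_max_right _ _
  set K : ℕ → ℕ := fun n => Nat.findGreatest (fun k => N' k ≤ n) n with hKdef
  have hKspec : ∀ n, N' 0 ≤ n → N' (K n) ≤ n := by
    intro n hn
    rcases Nat.eq_zero_or_pos (K n) with h0 | hp
    · rw [h0]; exact hn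
    · exact Nat.findGreatest_of_ne_zero (P := fun k => N' k ≤ n) rfl hp.ne'
  have hKge : ∀ b n : ℕ, N' b ≤ n → b ≤ K n := by
    intro b n hbn
    exact Nat.le_findGreatest (P := fun k => N' k ≤ n) (le_trans hN'mono.le_apply hbn) hbn
  have hKmono : Monotone K := by
    intro m n hmn
    exact Nat.findGreatest_mono (P := fun k => N' k ≤ m) (Q := fun k => N' k ≤ n)
      (fun k hk => le_trans hk hmn) hmn
  have hKtop : Tendsto K atTop atTop := by
    rw [tendsto_atTop_atTop]
    intro b
    exact ⟨N' b, fun n hn => hKge b n hn⟩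
  refine ⟨fun n => 1/((K n : ℝ)+2), fun n => by positivity, ?_, ?_, ?_⟩
  · intro m n hmn
    have h' : (K m : ℝ) ≤ (K n : ℝ) := Nat.cast_le.2 (hKmono hmn)
    exact one_div_le_one_div_of_le (by positivity) (by linarith)
  · have h2 : Tendsto (fun m : ℕ => 1/((m:ℝ)+2)) atTop (nhds 0) := by
      have h3 : Tendsto (fun m : ℕ => ((m:ℝ)+2)) atTop atTop :=
        tendsto_atTop_add_const_right atTop 2 tendsto_natCast_atTop_atTop
      have h4 : Tendsto (fun m : ℕ => ((m:ℝ)+2)⁻¹) atTop (nhds 0) := h3.inv_tendsto_atTop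
      simpa only [one_div] using h4
    exact h2.comp hKtop
  · filter_upwards [eventually_ge_atTop (N' 0)] with n hn
    exact hNspec (K n) n (le_trans (hN'ge _) (hKspec n hn))

theorem stmt_18 (F L : ℝ → ℝ) (α M : ℝ) (hα : 0 < α) (hM : 1 < M)
    (hF_mono : Monotone F) (hF0 : ∀ x, 0 ≤ F x) (hF1 : ∀ x, F x ≤ 1)
    (hL_pos : ∀ x > (0 : ℝ), 0 < L x)
    (hL_slow : ∀ t > (0 : ℝ), Tendsto (fun x => L (t * x) / L x) atTop (nhds 1))
    (hFbar : ∀ x > (0 : ℝ), 1 - F x = x ^ (-α) * L x)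
    (a : ℕ → ℝ) (ha : ∀ n, a n = sInf {x : ℝ | 1 - 1 / (n : ℝ) ≤ F x}) :
    ∃ ε : ℕ → ℝ, (∀ n, 0 < ε n) ∧ Antitone ε ∧ Tendsto ε atTop (nhds 0) ∧
      ∀ᶠ n : ℕ in atTop, ∀ x ∈ Set.Icc (1 : ℝ) M,
        (1 - ε n) / n * x ^ (-(Real.log n * (α + ε n) / α))
            ≤ 1 - F (a n * x ^ (Real.log n / α)) ∧
        1 - F (a n * x ^ (Real.log n / α))
            ≤ (1 + ε n) / n * x ^ (-(Real.log n * (α - ε n) / α)) := by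
  set G : ℝ → ℝ := fun x => 1 - F x with hGdef
  have hGanti : Antitone G := fun u v huv => sub_le_sub_left (hF_mono huv) 1
  have hGpos : ∀ x > (0:ℝ), 0 < G x := by
    intro x hx
    show (0:ℝ) < 1 - F x
    rw [hFbar x hx]
    exact mul_pos (Real.rpow_pos_of_pos hx _) (hL_pos x hx)
  have hGlim : ∀ t > (0:ℝ), Tendsto (fun x => G (t*x) / G x) atTop (nhds (t ^ (-α))) := by
    intro t ht
    have h1 : Tendsto (fun x => t ^ (-α) * (L (t*x) / L x)) atTop (nhds (t ^ (-α) * 1)) :=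
      (hL_slow t ht).const_mul _
    rw [mul_one] at h1
    apply h1.congr'
    filter_upwards [eventually_gt_atTop 0] with x hx
    have htx : 0 < t*x := mul_pos ht hx
    show t ^ (-α) * (L (t*x) / L x) = G (t*x) / G x
    have e1 : G (t*x) = (t*x) ^ (-α) * L (t*x) := hFbar _ htx
    have e2 : G x = x ^ (-α) * L x := hFbar _ hx
    rw [e1, e2, Real.mul_rpow ht.le hx.le]
    have hx0 : x ^ (-α) ≠ 0 := (Real.rpow_pos_of_pos hx _).ne'
    have hLx : L x ≠ 0 := (hL_pos x hx).ne'
    field_simp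
  have hpotter := potterAux G α hα hGanti hGpos hGlim
  have hGsmall : ∀ e : ℝ, 0 < e → ∃ z : ℝ, 1 ≤ z ∧ G z ≤ e := by
    intro e he
    have hδ00 : (0:ℝ) < min (1/2) (α/2) := lt_min (by norm_num) (by positivity)
    have hδ01 : min (1/2 : ℝ) (α/2) < 1 := lt_of_le_of_lt (min_le_left _ _) (by norm_num)
    obtain ⟨X, hX1, hP⟩ := hpotter _ hδ00 hδ01
    have hαδ : 0 < α - min (1/2 : ℝ) (α/2) := by
      have := min_le_right (1/2 : ℝ) (α/2); linarith
    have hten : Tendsto (fun y : ℝ => (1 + min (1/2 : ℝ) (α/2)) * y ^ (-(α - min (1/2 : ℝ) (α/2))) * G X)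
        atTop (nhds 0) := by
      have h4 : Tendsto (fun y : ℝ => y ^ (-(α - min (1/2 : ℝ) (α/2)))) atTop (nhds 0) :=
        tendsto_rpow_neg_atTop hαδ
      have h5 := (h4.const_mul (1 + min (1/2 : ℝ) (α/2))).mul_const (G X)
      simpa using h5
    obtain ⟨y, hylt, hy1⟩ := ((hten.eventually_lt_const he).and (eventually_ge_atTop 1)).exists
    refine ⟨X * y, ?_, ?_⟩
    · nlinarith
    · exact le_of_lt (lt_of_le_of_lt ((hP X le_rfl y hy1).2) hylt)
  have hSne : ∀ n : ℕ, 1 ≤ n → Set.Nonempty {x : ℝ | 1 - 1/(n:ℝ) ≤ F x} := by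
    intro n hn
    have hn0 : (0:ℝ) < 1/(n:ℝ) := by
      have : (0:ℝ) < (n:ℝ) := Nat.cast_pos.2 hn
      positivity
    obtain ⟨z, hz1, hz2⟩ := hGsmall (1/(n:ℝ)) hn0
    refine ⟨z, ?_⟩
    have hz2' : 1 - F z ≤ 1/(n:ℝ) := hz2
    show 1 - 1/(n:ℝ) ≤ F z
    linarith
  have haK : ∀ K : ℝ, 1 ≤ K → ∀ᶠ n : ℕ in atTop,
      (K ≤ a n ∧ 0 < a n ∧ 1 ≤ n) ∧ (∀ z, z < a n → 1/(n:ℝ) ≤ G z) ∧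
        (∀ z, a n < z → G z ≤ 1/(n:ℝ)) := by
    intro K hK
    have hGK : 0 < G K := hGpos K (by linarith)
    filter_upwards [tendsto_one_div_atTop_nhds_zero_nat.eventually_lt_const hGK,
      eventually_ge_atTop 1] with n hGKn h1
    have hGKn' : 1/(n:ℝ) < G K := hGKn
    have hmem : ∀ z : ℝ, z ∈ {x : ℝ | 1 - 1/(n:ℝ) ≤ F x} ↔ G z ≤ 1/(n:ℝ) := by
      intro z
      show 1 - 1/(n:ℝ) ≤ F z ↔ 1 - F z ≤ 1/(n:ℝ)
      constructor <;> intro <;> linarith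
    have hlb : ∀ z ∈ {x : ℝ | 1 - 1/(n:ℝ) ≤ F x}, K ≤ z := by
      intro z hz
      by_contra hzK
      push_neg at hzK
      have h2 : G K ≤ G z := hGanti hzK.le
      have h3 := (hmem z).1 hz
      exact absurd (le_trans h2 h3) (not_le.2 hGKn')
    have hbdd : BddBelow {x : ℝ | 1 - 1/(n:ℝ) ≤ F x} := ⟨K, hlb⟩
    have hne := hSne n h1
    have haS : a n = sInf {x : ℝ | 1 - 1/(n:ℝ) ≤ F x} := ha n
    have hKan : K ≤ a n := by rw [haS]; exact le_csInf hne hlb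
    refine ⟨⟨hKan, by linarith, h1⟩, ?_, ?_⟩
    · intro z hz
      have hzS : z ∉ {x : ℝ | 1 - 1/(n:ℝ) ≤ F x} := by
        intro hmem'
        exact absurd (haS ▸ csInf_le hbdd hmem') (not_le.2 hz)
      have h4 : ¬ (G z ≤ 1/(n:ℝ)) := fun hc => hzS ((hmem z).2 hc)
      linarith [not_le.1 h4]
    · intro z hz
      obtain ⟨t, htS, htz⟩ := exists_lt_of_csInf_lt hne (haS ▸ hz)
      exact le_trans (hGanti htz.le) ((hmem t).1 htS)
  -- the key uniform estimate for a fixed tolerance δ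
  have key : ∀ δ : ℝ, 0 < δ → δ < 1 → ∀ᶠ n : ℕ in atTop, ∀ x ∈ Set.Icc (1:ℝ) M,
      (1 - δ) / n * x ^ (-(Real.log n * (α + δ) / α))
          ≤ 1 - F (a n * x ^ (Real.log n / α)) ∧
      1 - F (a n * x ^ (Real.log n / α))
          ≤ (1 + δ) / n * x ^ (-(Real.log n * (α - δ) / α)) := by
    intro δ hδ0 hδ1
    have hδ30 : (0:ℝ) < δ/6 := by linarith
    have hδ31 : δ/6 < 1 := by linarith
    obtain ⟨X, hX1, hP⟩ := hpotter (δ/6) hδ30 hδ31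
    set δ3 : ℝ := δ/6 with hδ3def
    set c2 : ℝ := (1+δ3) ^ (1/(α+1)) with hc2def
    have hc21 : 1 < c2 := by
      rw [hc2def]
      exact Real.one_lt_rpow_iff_of_pos (by linarith) |>.2 (Or.inl ⟨by linarith, by positivity⟩)
    have hc20 : (0:ℝ) < c2 := by linarith
    have hA2 : c2 ^ (α+δ3) ≤ 1+δ3 := by
      have h1 : c2 ^ (α+δ3) ≤ c2 ^ (α+1) := Real.rpow_le_rpow_of_exponent_le hc21.le (by linarith)
      have h2 : c2 ^ (α+1) = 1+δ3 := by
        rw [hc2def, ← Real.rpow_mul (by linarith), one_div_mul_cancel (by positivity), Real.rpow_one]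
      linarith
    set A : ℝ := c2 ^ (α+δ3) with hAdef
    have hA0 : (0:ℝ) < A := Real.rpow_pos_of_pos hc20 _
    have hAneg : c2 ^ (-(α+δ3)) = A⁻¹ := Real.rpow_neg hc20.le _
    filter_upwards [haK (max (c2*X) 1) (le_max_right _ _)] with n hn
    obtain ⟨⟨hKa, han0, h1n⟩, hlow, hup⟩ := hn
    have hanc2X : c2 * X ≤ a n := le_trans (le_max_left _ _) hKa
    have hanX : X ≤ a n := by nlinarith
    have hn0 : (0:ℝ) < n := Nat.cast_pos.2 h1n
    have hlogn : 0 ≤ Real.log n := Real.log_nonneg (by exact_mod_cast h1n)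
    -- quantile upper bound
    have hq1 : G (a n * c2) ≤ 1/(n:ℝ) := hup _ (lt_mul_of_one_lt_right han0 hc21)
    have hq2 := (hP (a n) hanX c2 hc21.le).1
    rw [hAneg] at hq2
    have hGaU : G (a n) ≤ ((1+δ3)*(1/(n:ℝ)))/(1-δ3) := by
      have h4 := le_trans hq2 hq1
      have h5 := mul_le_mul_of_nonneg_left h4 hA0.le
      have h6 : (1-δ3) * G (a n) ≤ A * (1/(n:ℝ)) := by
        have h7 : A * ((1-δ3) * A⁻¹ * G (a n)) = (1-δ3) * G (a n) := by
          field_simp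
        linarith [h5, h7.symm.le]
      rw [le_div_iff₀ (by linarith : (0:ℝ) < 1-δ3)]
      have h8 : A * (1/(n:ℝ)) ≤ (1+δ3) * (1/(n:ℝ)) :=
        mul_le_mul_of_nonneg_right hA2 (by positivity)
      linarith
    -- quantile lower bound
    have hXan2 : X ≤ a n / c2 := by
      rw [le_div_iff₀ hc20]
      linarith [hanc2X]
    have hq3 := (hP (a n / c2) hXan2 c2 hc21.le).1
    rw [div_mul_cancel₀ _ hc20.ne', hAneg] at hq3
    have hq4 : 1/(n:ℝ) ≤ G (a n / c2) := hlow _ (div_lt_self han0 hc21)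
    have hGaL : ((1-δ3)*(1/(n:ℝ)))/(1+δ3) ≤ G (a n) := by
      have hpos : (0:ℝ) ≤ (1-δ3) * A⁻¹ :=
        mul_nonneg (by linarith) (inv_nonneg.2 hA0.le)
      have h6 : (1-δ3) * A⁻¹ * (1/(n:ℝ)) ≤ G (a n) :=
        le_trans (mul_le_mul_of_nonneg_left hq4 hpos) hq3
      have h7 : (1+δ3)⁻¹ ≤ A⁻¹ := by
        rw [← one_div, ← one_div]
        exact one_div_le_one_div_of_le hA0 hA2
      calc ((1-δ3)*(1/(n:ℝ)))/(1+δ3) = (1-δ3) * (1+δ3)⁻¹ * (1/(n:ℝ)) := by ring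
        _ ≤ (1-δ3) * A⁻¹ * (1/(n:ℝ)) := by
            apply mul_le_mul_of_nonneg_right
              (mul_le_mul_of_nonneg_left h7 (by linarith)) (by positivity)
        _ ≤ G (a n) := h6
    -- pointwise in x
    intro x hx
    obtain ⟨hx1, hxM⟩ := hx
    have hx0 : (0:ℝ) < x := lt_of_lt_of_le one_pos hx1
    have hs0 : 0 ≤ Real.log n / α := div_nonneg hlogn hα.le
    have hy1 : (1:ℝ) ≤ x ^ (Real.log n / α) := Real.one_le_rpow hx1 hs0
    have hy0 : (0:ℝ) < x ^ (Real.log n / α) := lt_of_lt_of_le one_pos hy1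
    obtain ⟨hpl, hpu⟩ := hP (a n) hanX (x ^ (Real.log n / α)) hy1
    have hexpL : x ^ (-(Real.log n * (α + δ) / α)) ≤ (x ^ (Real.log n / α)) ^ (-(α+δ3)) := by
      rw [← Real.rpow_mul hx0.le]
      apply Real.rpow_le_rpow_of_exponent_le hx1
      have h9 : Real.log n / α * (α+δ3) ≤ Real.log n / α * (α+δ) :=
        mul_le_mul_of_nonneg_left (by linarith) hs0
      have h10 : Real.log n / α * (α+δ) = Real.log n * (α+δ) / α := by ring
      have h11 : Real.log n / α * -(α+δ3) = -(Real.log n / α * (α+δ3)) := by ring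
      rw [h11]
      linarith [h10 ▸ h9]
    have hexpU : (x ^ (Real.log n / α)) ^ (-(α-δ3)) ≤ x ^ (-(Real.log n * (α - δ) / α)) := by
      rw [← Real.rpow_mul hx0.le]
      apply Real.rpow_le_rpow_of_exponent_le hx1
      have h9 : Real.log n / α * (α-δ) ≤ Real.log n / α * (α-δ3) :=
        mul_le_mul_of_nonneg_left (by linarith) hs0
      have h10 : Real.log n / α * (α-δ) = Real.log n * (α-δ) / α := by ring
      have h11 : Real.log n / α * -(α-δ3) = -(Real.log n / α * (α-δ3)) := by ring
      rw [h11]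
      linarith [h10 ▸ h9]
    have hT'0 : (0:ℝ) ≤ x ^ (-(Real.log n * (α + δ) / α)) := (Real.rpow_pos_of_pos hx0 _).le
    have hY'0 : (0:ℝ) ≤ (x ^ (Real.log n / α)) ^ (-(α+δ3)) := (Real.rpow_pos_of_pos hy0 _).le
    have hYU0 : (0:ℝ) ≤ (x ^ (Real.log n / α)) ^ (-(α-δ3)) := (Real.rpow_pos_of_pos hy0 _).le
    constructor
    · show (1 - δ) / n * x ^ (-(Real.log n * (α + δ) / α)) ≤ G (a n * x ^ (Real.log n / α))
      have hc1 : (1-δ3) * (x ^ (Real.log n / α)) ^ (-(α+δ3)) * (((1-δ3)*(1/(n:ℝ)))/(1+δ3))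
          ≤ G (a n * x ^ (Real.log n / α)) := by
        refine le_trans ?_ hpl
        exact mul_le_mul_of_nonneg_left hGaL (mul_nonneg (by linarith) hY'0)
      refine le_trans ?_ hc1
      have hconst : (1-δ) ≤ (1-δ3)*(1-δ3)/(1+δ3) := by
        rw [le_div_iff₀ (by linarith : (0:ℝ) < 1+δ3)]
        nlinarith
      calc (1 - δ) / n * x ^ (-(Real.log n * (α + δ) / α))
          = ((1-δ) * (1/(n:ℝ))) * x ^ (-(Real.log n * (α + δ) / α)) := by ring
        _ ≤ (((1-δ3)*(1-δ3)/(1+δ3)) * (1/(n:ℝ))) * ((x ^ (Real.log n / α)) ^ (-(α+δ3))) := by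
            exact mul_le_mul (mul_le_mul_of_nonneg_right hconst (by positivity)) hexpL hT'0
              (mul_nonneg (div_nonneg (mul_nonneg (by linarith) (by linarith)) (by linarith))
                (by positivity))
        _ = (1-δ3) * (x ^ (Real.log n / α)) ^ (-(α+δ3)) * (((1-δ3)*(1/(n:ℝ)))/(1+δ3)) := by
            ring
    · show G (a n * x ^ (Real.log n / α)) ≤ (1 + δ) / n * x ^ (-(Real.log n * (α - δ) / α))
      have hc1 : G (a n * x ^ (Real.log n / α))
          ≤ (1+δ3) * (x ^ (Real.log n / α)) ^ (-(α-δ3)) * (((1+δ3)*(1/(n:ℝ)))/(1-δ3)) := by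
        refine le_trans hpu ?_
        exact mul_le_mul_of_nonneg_left hGaU (mul_nonneg (by linarith) hYU0)
      refine le_trans hc1 ?_
      have hconst : (1+δ3)*(1+δ3)/(1-δ3) ≤ 1+δ := by
        rw [div_le_iff₀ (by linarith : (0:ℝ) < 1-δ3)]
        nlinarith
      calc (1+δ3) * (x ^ (Real.log n / α)) ^ (-(α-δ3)) * (((1+δ3)*(1/(n:ℝ)))/(1-δ3))
          = (((1+δ3)*(1+δ3)/(1-δ3)) * (1/(n:ℝ))) * ((x ^ (Real.log n / α)) ^ (-(α-δ3))) := by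
            ring
        _ ≤ ((1+δ) * (1/(n:ℝ))) * (x ^ (-(Real.log n * (α - δ) / α))) := by
            exact mul_le_mul (mul_le_mul_of_nonneg_right hconst (by positivity)) hexpU hYU0
              (mul_nonneg (by linarith) (by positivity))
        _ = (1 + δ) / n * x ^ (-(Real.log n * (α - δ) / α)) := by ring
  -- diagonalization
  have hkey' : ∀ k : ℕ, ∀ᶠ n : ℕ in atTop, ∀ x ∈ Set.Icc (1:ℝ) M,
      (1 - (1/((k:ℝ)+2))) / n * x ^ (-(Real.log n * (α + (1/((k:ℝ)+2))) / α))
          ≤ 1 - F (a n * x ^ (Real.log n / α)) ∧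
      1 - F (a n * x ^ (Real.log n / α))
          ≤ (1 + (1/((k:ℝ)+2))) / n * x ^ (-(Real.log n * (α - (1/((k:ℝ)+2))) / α)) := by
    intro k
    apply key
    · positivity
    · rw [div_lt_one (by positivity)]
      have : (0:ℝ) ≤ (k:ℝ) := Nat.cast_nonneg k
      linarith
  obtain ⟨ε, hε0, hεanti, hεlim, hεev⟩ := diagAux
    (fun n e => ∀ x ∈ Set.Icc (1:ℝ) M,
      (1 - e) / n * x ^ (-(Real.log n * (α + e) / α))
          ≤ 1 - F (a n * x ^ (Real.log n / α)) ∧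
      1 - F (a n * x ^ (Real.log n / α))
          ≤ (1 + e) / n * x ^ (-(Real.log n * (α - e) / α))) hkey'
  exact ⟨ε, hε0, hεanti, hεlim, hεev⟩
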